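/- Let (f₊, f₋) and (g₊, g₋) be holomorphic pairs on Ω, let ℏ ∈ 𝒟 and let (z,w) ∈ O. Then the Wick star product series converges absolutely at (z,w): the function n ↦ ‖((−1)^n / n!) · (1/(−1/ℏ)_{n↓}) · D^{n,0} g₊(z,w) · D^{0,n} f₊(z,w)‖ is summable over n ∈ ℕ. -/

import Mathlib

/-- The domain `O = {(z,w) ∈ ℂ² : z·w ≠ 1}`. -/
def Oset : Set (ℂ × ℂ) := {p | p.1 * p.2 ≠ 1}

/-- The Peschl–Minda derivative of order `(m,n)` of `f` at `(z,w)`. -/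
noncomputable def PM (m n : ℕ) (f : ℂ × ℂ → ℂ) (z w : ℂ) : ℂ :=
  iteratedDeriv n (fun v => iteratedDeriv m
    (fun u => f ((z + u) / (1 + w * u), (w + v) / (1 + z * v))) 0) 0

/-- A holomorphic pair on `Ω`: two functions holomorphic on `O` which agree under the
flip `(z,w) ↦ (1/w,1/z)`. -/
def IsHolPair (fp fm : ℂ × ℂ → ℂ) : Prop :=
  DifferentiableOn ℂ fp Oset ∧ DifferentiableOn ℂ fm Oset ∧
    ∀ z w : ℂ, z ≠ 0 → w ≠ 0 → z * w ≠ 1 → fp (z, w) = fm (1 / w, 1 / z)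

/-- The falling factorial `(x)_{n↓} = x(x−1)⋯(x−n+1)`. -/
noncomputable def ffall (x : ℂ) (n : ℕ) : ℂ := ∏ j ∈ Finset.range n, (x - j)

/-- The deformation domain `𝒟 = ℂ* ∖ {−1/n : n ∈ ℕ}`. -/
def Dset : Set ℂ := {h | h ≠ 0 ∧ ∀ n : ℕ, 0 < n → h ≠ -1 / (n : ℂ)}

lemma Oset_open : IsOpen Oset :=
  IsOpen.preimage (continuous_fst.mul continuous_snd) isOpen_ne

/-- The Möbius-composed slice extends to an entire function. -/
lemma entire_ext (fp fm : ℂ × ℂ → ℂ) (hf : IsHolPair fp fm) (z w : ℂ) (hzw : z * w ≠ 1) :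
    ∃ G : ℂ → ℂ, Differentiable ℂ G ∧ ∀ᶠ u in nhds 0, G u = fp ((z + u) / (1 + w * u), w) := by
  obtain ⟨hfp, hfm, hpair⟩ := hf
  by_cases hw : w = 0
  · refine ⟨fun u => fp (z + u, 0), ?_, ?_⟩
    · intro u
      have hmem : (z + u, (0:ℂ)) ∈ Oset := by simp [Oset]
      have h1 : DifferentiableAt ℂ fp (z + u, 0) :=
        hfp.differentiableAt (Oset_open.mem_nhds hmem)
      exact h1.comp u (by fun_prop)
    · filter_upwards with u
      simp [hw]
  · -- w ≠ 0
    have hkey : ∀ u : ℂ, 1 + w * u ≠ 0 → ((z + u) / (1 + w * u)) * w ≠ 1 := by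
      intro u hu h
      apply hzw
      rw [div_mul_eq_mul_div, div_eq_one_iff_eq hu] at h
      have : z * w = 1 + w * u - u * w := by linear_combination h
      rw [this]; ring
    set G : ℂ → ℂ := fun u => if u = -w⁻¹ then fm (w⁻¹, 0) else fp ((z + u) / (1 + w * u), w)
      with hG
    have hne : ∀ u : ℂ, u ≠ -w⁻¹ → 1 + w * u ≠ 0 := by
      intro u hu h
      apply hu
      have h1 : w * u = -1 := by linear_combination h
      calc u = w⁻¹ * (w * u) := by field_simp
        _ = -w⁻¹ := by rw [h1]; ring
    refine ⟨G, ?_, ?_⟩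
    · intro u0
      by_cases hu0 : u0 = -w⁻¹
      · -- glue with fm
        subst hu0
        have hzne : z + -w⁻¹ ≠ 0 := by
          intro h
          apply hzw
          field_simp at h
          linear_combination h
        set Gm : ℂ → ℂ := fun u => fm (w⁻¹, (1 + w * u) / (z + u)) with hGm
        have hdGm : DifferentiableAt ℂ Gm (-w⁻¹) := by
          have hmem : ((w⁻¹ : ℂ), (1 + w * (-w⁻¹)) / (z + -w⁻¹)) ∈ Oset := by
            simp [Oset, hw]
          have h1 : DifferentiableAt ℂ fm (w⁻¹, (1 + w * (-w⁻¹)) / (z + -w⁻¹)) :=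
            hfm.differentiableAt (Oset_open.mem_nhds hmem)
          have h2 : DifferentiableAt ℂ (fun u : ℂ => ((w⁻¹ : ℂ), (1 + w * u) / (z + u)))
              (-w⁻¹) := by
            exact DifferentiableAt.prodMk (differentiableAt_const _)
              (DifferentiableAt.div (by fun_prop : DifferentiableAt ℂ (fun u : ℂ => 1 + w * u) (-w⁻¹))
                (by fun_prop : DifferentiableAt ℂ (fun u : ℂ => z + u) (-w⁻¹)) hzne)
          have h3 := h1.comp (-w⁻¹) h2
          exact h3
        have heq : G =ᶠ[nhds (-w⁻¹)] Gm := by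
          have hopen : IsOpen {u : ℂ | z + u ≠ 0} := by
            exact IsOpen.preimage (by fun_prop) isOpen_ne
          filter_upwards [hopen.mem_nhds (by exact hzne)] with u hu
          by_cases h : u = -w⁻¹
          · subst h
            simp [hG, hGm, hw]
          · have hden := hne u h
            have hnum : z + u ≠ 0 := hu
            have hz : (z + u) / (1 + w * u) ≠ 0 := div_ne_zero hnum hden
            have := hpair ((z + u) / (1 + w * u)) w hz hw (hkey u hden)
            simp only [hG, hGm, if_neg h]
            rw [this]
            simp [one_div, inv_div]
        exact hdGm.congr_of_eventuallyEq heq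
      · have hden := hne u0 hu0
        have hmem : (((z + u0) / (1 + w * u0)), w) ∈ Oset := hkey u0 hden
        have h1 : DifferentiableAt ℂ fp ((z + u0) / (1 + w * u0), w) :=
          hfp.differentiableAt (Oset_open.mem_nhds hmem)
        have hdF : DifferentiableAt ℂ (fun u => fp ((z + u) / (1 + w * u), w)) u0 :=
          h1.comp u0 (by fun_prop (disch := assumption))
        have heq : G =ᶠ[nhds u0] fun u => fp ((z + u) / (1 + w * u), w) := by
          have hopen : IsOpen {u : ℂ | u ≠ -w⁻¹} := isOpen_ne
          filter_upwards [hopen.mem_nhds hu0] with u hu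
          simp [hG, if_neg hu]
        exact hdF.congr_of_eventuallyEq heq
    · have hopen : IsOpen {u : ℂ | u ≠ -w⁻¹} := isOpen_ne
      have h0 : (0:ℂ) ≠ -w⁻¹ := by
        simp [hw, eq_comm, neg_eq_zero]
      filter_upwards [hopen.mem_nhds h0] with u hu
      simp [hG, if_neg hu]

/-- Cauchy-type coefficient bounds for a function locally equal to an entire function. -/
lemma coeff_bound (F G : ℂ → ℂ) (hG : Differentiable ℂ G)
    (heq : ∀ᶠ u in nhds 0, G u = F u) (r : NNReal) :
    ∃ a : ℕ → ℝ, (∀ n, 0 ≤ a n) ∧ Summable (fun n => a n * (r : ℝ) ^ n) ∧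
      ∀ n, ‖iteratedDeriv n F 0‖ ≤ n.factorial * a n := by
  have hd : DifferentiableOn ℂ G (Metric.closedBall 0 (r + 1)) := hG.differentiableOn
  have h := hd.hasFPowerSeriesOnBall (show (0 : NNReal) < r + 1 by positivity)
  set p := cauchyPowerSeries G 0 (r + 1) with hp
  refine ⟨fun n => ‖p n‖, fun n => norm_nonneg _, ?_, ?_⟩
  · apply p.summable_norm_mul_pow
    calc (r : ENNReal) < ((r + 1 : NNReal) : ENNReal) := by
          exact_mod_cast lt_add_of_pos_right r one_pos
      _ ≤ p.radius := h.r_le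
  · intro n
    have e1 : iteratedDeriv n F 0 = iteratedDeriv n G 0 :=
      (Filter.EventuallyEq.iteratedDeriv_eq n heq).symm
    have e2 : iteratedDeriv n G 0 = iteratedFDeriv ℂ n G 0 (fun _ => 1) :=
      iteratedDeriv_eq_iteratedFDeriv
    have e3 := h.factorial_smul (1 : ℂ) n
    rw [e1, e2, ← e3, nsmul_eq_mul, norm_mul]
    have e4 : ‖p n fun _ => (1 : ℂ)‖ ≤ ‖p n‖ := by
      have := (p n).le_opNorm (fun _ => (1 : ℂ))
      simpa using this
    have e5 : ‖(n.factorial : ℂ)‖ = (n.factorial : ℝ) := by simp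
    rw [e5]
    exact mul_le_mul_of_nonneg_left e4 (by positivity)

/-- Nonvanishing of the shifted reciprocals. -/
lemma shift_ne (ℏ : ℂ) (hℏ : ℏ ∈ Dset) : ∀ j : ℕ, ((j : ℂ) + ℏ⁻¹) ≠ 0 := by
  intro j h
  rcases Nat.eq_zero_or_pos j with h0 | h0
  · subst h0
    simp only [Nat.cast_zero, zero_add, inv_eq_zero] at h
    exact hℏ.1 h
  · apply hℏ.2 j h0
    have h1 : ℏ⁻¹ = -(j : ℂ) := by linear_combination h
    rw [← inv_inv ℏ, h1, inv_neg, neg_div, one_div]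

/-- The linear-growth bound for shifted reciprocals. -/
lemma shift_bound (ℏ : ℂ) (hℏ : ℏ ∈ Dset) :
    ∃ C : ℝ, 1 ≤ C ∧ ∀ j : ℕ, (j + 1 : ℝ) ≤ C * ‖(j : ℂ) + ℏ⁻¹‖ := by
  have hne := shift_ne ℏ hℏ
  have hpos : ∀ j : ℕ, (0:ℝ) < ‖(j : ℂ) + ℏ⁻¹‖ := fun j => norm_pos_iff.mpr (hne j)
  set x : ℝ := ‖ℏ⁻¹‖ with hx
  set N : ℕ := ⌈2 * x + 1⌉₊ with hN
  set d : ℕ → ℝ := fun j => (j + 1) / ‖(j : ℂ) + ℏ⁻¹‖ with hd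
  have hdnn : ∀ j, 0 ≤ d j := fun j => div_nonneg (by positivity) (norm_nonneg _)
  refine ⟨2 + ∑ j ∈ Finset.range N, d j, ?_, ?_⟩
  · have : 0 ≤ ∑ j ∈ Finset.range N, d j := Finset.sum_nonneg fun j _ => hdnn j
    linarith
  · intro j
    by_cases hj : j < N
    · have h1 : d j ≤ ∑ i ∈ Finset.range N, d i :=
        Finset.single_le_sum (fun i _ => hdnn i) (Finset.mem_range.mpr hj)
      have h2 : d j ≤ 2 + ∑ i ∈ Finset.range N, d i := by linarith
      calc (j + 1 : ℝ) = d j * ‖(j : ℂ) + ℏ⁻¹‖ :=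
            (div_mul_cancel₀ _ (ne_of_gt (hpos j))).symm
        _ ≤ (2 + ∑ i ∈ Finset.range N, d i) * ‖(j : ℂ) + ℏ⁻¹‖ :=
            mul_le_mul_of_nonneg_right h2 (norm_nonneg _)
    · push_neg at hj
      have hjx : 2 * x + 1 ≤ (j : ℝ) := by
        calc 2 * x + 1 ≤ (N : ℝ) := Nat.le_ceil _
          _ ≤ (j : ℝ) := by exact_mod_cast hj
      have hlow : (j : ℝ) - x ≤ ‖(j : ℂ) + ℏ⁻¹‖ := by
        have h1 : ‖(j : ℂ)‖ ≤ ‖(j : ℂ) + ℏ⁻¹‖ + ‖ℏ⁻¹‖ := by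
          calc ‖(j : ℂ)‖ = ‖((j : ℂ) + ℏ⁻¹) + (-ℏ⁻¹)‖ := by ring_nf
            _ ≤ ‖(j : ℂ) + ℏ⁻¹‖ + ‖(-ℏ⁻¹ : ℂ)‖ := norm_add_le _ _
            _ = ‖(j : ℂ) + ℏ⁻¹‖ + ‖ℏ⁻¹‖ := by rw [norm_neg]
        have h2 : ‖(j : ℂ)‖ = (j : ℝ) := by simp
        rw [h2] at h1
        linarith
      have hx0 : 0 ≤ x := norm_nonneg _
      have h3 : (j + 1 : ℝ) ≤ 2 * ((j : ℝ) - x) := by linarith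
      have hsum : 0 ≤ ∑ i ∈ Finset.range N, d i := Finset.sum_nonneg fun i _ => hdnn i
      calc (j + 1 : ℝ) ≤ 2 * ((j : ℝ) - x) := h3
        _ ≤ 2 * ‖(j : ℂ) + ℏ⁻¹‖ := by linarith [mul_le_mul_of_nonneg_left hlow (by norm_num : (0:ℝ) ≤ 2)]
        _ ≤ (2 + ∑ i ∈ Finset.range N, d i) * ‖(j : ℂ) + ℏ⁻¹‖ := by
            apply mul_le_mul_of_nonneg_right _ (norm_nonneg _)
            linarith

/-- Factorial versus falling factorial bound. -/
lemma fact_le (ℏ : ℂ) (hℏ : ℏ ∈ Dset) {C : ℝ} (hC1 : 1 ≤ C)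
    (hC : ∀ j : ℕ, (j + 1 : ℝ) ≤ C * ‖(j : ℂ) + ℏ⁻¹‖) (n : ℕ) :
    (n.factorial : ℝ) ≤ C ^ n * ‖ffall (-1 / ℏ) n‖ := by
  have hfact : (n.factorial : ℝ) = ∏ j ∈ Finset.range n, ((j : ℝ) + 1) := by
    induction n with
    | zero => simp
    | succ m ih =>
      rw [Finset.prod_range_succ, ← ih, Nat.factorial_succ]
      push_cast
      ring
  have hnorm : ‖ffall (-1 / ℏ) n‖ = ∏ j ∈ Finset.range n, ‖(j : ℂ) + ℏ⁻¹‖ := by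
    rw [ffall, norm_prod]
    apply Finset.prod_congr rfl
    intro j _
    have : (-1 / ℏ - (j : ℂ)) = -(((j : ℂ)) + ℏ⁻¹) := by ring
    rw [this, norm_neg]
  have hdist : C ^ n * ∏ j ∈ Finset.range n, ‖(j : ℂ) + ℏ⁻¹‖
      = ∏ j ∈ Finset.range n, (C * ‖(j : ℂ) + ℏ⁻¹‖) := by
    rw [Finset.prod_mul_distrib, Finset.prod_const, Finset.card_range]
  rw [hnorm, hfact, hdist]
  apply Finset.prod_le_prod
  · intro j _; positivity
  · intro j _; exact hC j

/-- absolute convergence of the Wick star product series at `(z,w)`. -/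
theorem stmt16 (fp fm gp gm : ℂ × ℂ → ℂ)
    (hf : IsHolPair fp fm) (hg : IsHolPair gp gm)
    (ℏ : ℂ) (hℏ : ℏ ∈ Dset) (z w : ℂ) (hzw : z * w ≠ 1) :
    Summable (fun n : ℕ =>
      ‖((-1 : ℂ) ^ n / (n.factorial : ℂ)) * (1 / ffall (-1 / ℏ) n)
        * PM n 0 gp z w * PM 0 n fp z w‖) := by
  -- falling factorial bounds
  obtain ⟨C, hC1, hC⟩ := shift_bound ℏ hℏ
  have hCpos : (0:ℝ) < C := lt_of_lt_of_le one_pos hC1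
  have hffne : ∀ n : ℕ, ffall (-1 / ℏ) n ≠ 0 := by
    intro n
    rw [ffall]
    apply Finset.prod_ne_zero_iff.mpr
    intro j _
    have h1 := shift_ne ℏ hℏ j
    intro h
    apply h1
    linear_combination -h
  have hffpos : ∀ n : ℕ, (0:ℝ) < ‖ffall (-1 / ℏ) n‖ :=
    fun n => norm_pos_iff.mpr (hffne n)
  -- entire extensions
  obtain ⟨Gg, hGgd, hGgeq⟩ := entire_ext gp gm hg z w hzw
  have hzw' : w * z ≠ 1 := by rwa [mul_comm]
  have hf' : IsHolPair (fun p => fp (p.2, p.1)) (fun p => fm (p.2, p.1)) := by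
    refine ⟨?_, ?_, ?_⟩
    · exact hf.1.comp ((differentiable_snd.prodMk differentiable_fst)).differentiableOn
        (fun p hp => by simpa [Oset, mul_comm] using hp)
    · exact hf.2.1.comp ((differentiable_snd.prodMk differentiable_fst)).differentiableOn
        (fun p hp => by simpa [Oset, mul_comm] using hp)
    · intro a b ha hb hab
      exact hf.2.2 b a hb ha (by rwa [mul_comm])
  obtain ⟨Gf, hGfd, hGfeq⟩ := entire_ext _ _ hf' w z hzw'
  -- PM rewriting
  have hPMg : ∀ n : ℕ, PM n 0 gp z w =
      iteratedDeriv n (fun u => gp ((z + u) / (1 + w * u), w)) 0 := by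
    intro n
    simp [PM]
  have hPMf : ∀ n : ℕ, PM 0 n fp z w =
      iteratedDeriv n (fun v => fp (z, (w + v) / (1 + z * v))) 0 := by
    intro n
    simp [PM]
  -- coefficient bounds at radius C
  set Cn : NNReal := C.toNNReal with hCn
  have hCnr : (Cn : ℝ) = C := Real.coe_toNNReal C hCpos.le
  obtain ⟨a, hann, hasum, ha⟩ := coeff_bound _ Gg hGgd hGgeq Cn
  obtain ⟨b, hbnn, hbsum, hb⟩ := coeff_bound _ Gf hGfd hGfeq Cn
  rw [hCnr] at hasum hbsum
  -- bound b
  have hbB : ∃ B : ℝ, 0 ≤ B ∧ ∀ n, b n ≤ B := by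
    have ht : Filter.Tendsto (fun n => b n * C ^ n) Filter.atTop (nhds 0) :=
      hbsum.tendsto_atTop_zero
    obtain ⟨B, hB⟩ := ht.bddAbove_range
    rw [mem_upperBounds] at hB
    refine ⟨B, ?_, ?_⟩
    · exact le_trans (mul_nonneg (hbnn 0) (by positivity)) (hB _ (Set.mem_range_self 0))
    · intro n
      have h1 : b n * C ^ n ≤ B := hB _ (Set.mem_range_self n)
      have h2 : b n ≤ b n * C ^ n := by
        nlinarith [hbnn n, one_le_pow₀ hC1 (n := n)]
      linarith
  obtain ⟨B, hB0, hB⟩ := hbB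
  -- comparison
  refine Summable.of_nonneg_of_le (fun n => norm_nonneg _) ?_ (hasum.mul_right B)
  · intro n
    have hfle := fact_le ℏ hℏ hC1 hC n
    have hfacpos : (0:ℝ) < (n.factorial : ℝ) := by positivity
    have hDg : ‖PM n 0 gp z w‖ ≤ n.factorial * a n := by
      rw [hPMg n]; exact ha n
    have hDf : ‖PM 0 n fp z w‖ ≤ n.factorial * B := by
      rw [hPMf n]
      calc ‖iteratedDeriv n (fun v => fp (z, (w + v) / (1 + z * v))) 0‖
          ≤ n.factorial * b n := hb n
        _ ≤ n.factorial * B := by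
            exact mul_le_mul_of_nonneg_left (hB n) hfacpos.le
    have enorm : ‖((-1 : ℂ) ^ n / (n.factorial : ℂ)) * (1 / ffall (-1 / ℏ) n)
        * PM n 0 gp z w * PM 0 n fp z w‖
        = 1 / (n.factorial : ℝ) * (1 / ‖ffall (-1 / ℏ) n‖) * ‖PM n 0 gp z w‖
          * ‖PM 0 n fp z w‖ := by
      simp [norm_mul, norm_div]
    rw [enorm]
    have key : 1 / (n.factorial : ℝ) * (1 / ‖ffall (-1 / ℏ) n‖)
        * (n.factorial * a n) * (n.factorial * B)
        = ((n.factorial : ℝ) / ‖ffall (-1 / ℏ) n‖) * (a n * B) := by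
      have gen : ∀ (f F A B' : ℝ), f ≠ 0 → F ≠ 0 →
          1/f * (1/F) * (f*A) * (f*B') = f/F*(A*B') := by
        intros f F A B' hf hF
        field_simp
      exact gen _ _ _ _ hfacpos.ne' (hffpos n).ne'
    have hA : (0:ℝ) ≤ 1 / (n.factorial : ℝ) * (1 / ‖ffall (-1 / ℏ) n‖) := by positivity
    have s1 : 1 / (n.factorial : ℝ) * (1 / ‖ffall (-1 / ℏ) n‖) * ‖PM n 0 gp z w‖
        ≤ 1 / (n.factorial : ℝ) * (1 / ‖ffall (-1 / ℏ) n‖) * (n.factorial * a n) :=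
      mul_le_mul_of_nonneg_left hDg hA
    have s2 : 1 / (n.factorial : ℝ) * (1 / ‖ffall (-1 / ℏ) n‖) * ‖PM n 0 gp z w‖
          * ‖PM 0 n fp z w‖
        ≤ 1 / (n.factorial : ℝ) * (1 / ‖ffall (-1 / ℏ) n‖) * (n.factorial * a n)
          * (n.factorial * B) :=
      mul_le_mul s1 hDf (norm_nonneg _)
        (mul_nonneg hA (mul_nonneg hfacpos.le (hann n)))
    calc 1 / (n.factorial : ℝ) * (1 / ‖ffall (-1 / ℏ) n‖) * ‖PM n 0 gp z w‖
          * ‖PM 0 n fp z w‖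
        ≤ 1 / (n.factorial : ℝ) * (1 / ‖ffall (-1 / ℏ) n‖)
          * (n.factorial * a n) * (n.factorial * B) := s2
      _ = ((n.factorial : ℝ) / ‖ffall (-1 / ℏ) n‖) * (a n * B) := key
      _ ≤ C ^ n * (a n * B) := by
          apply mul_le_mul_of_nonneg_right _ (mul_nonneg (hann n) hB0)
          rw [div_le_iff₀ (hffpos n)]
          exact hfle
      _ = a n * C ^ n * B := by ring
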